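/- The continued fraction expansion of an irrational real number a is eventually periodic if and only if a is a quadratic irrational (a root of a quadratic polynomial with rational coefficients). -/

import Mathlib

set_option maxHeartbeats 1000000 in
theorem periodic_iff_quadratic (a : ℝ) (ha : Irrational a)
    (aCF : ℕ → ℤ) (ζ : ℕ → ℝ)
    (hζ0 : ζ 0 = a)
    (hfloor : ∀ k, aCF k = ⌊ζ k⌋)
    (hζ : ∀ k, ζ k = (aCF k : ℝ) + 1 / ζ (k + 1))
    (p q : ℕ → ℤ)
    (hq0 : q 0 = 1) (hq1 : q 1 = aCF 1)
    (hqrec : ∀ k, q (k + 2) = aCF (k + 2) * q (k + 1) + q k)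
    (hp0 : p 0 = aCF 0) (hp1 : p 1 = aCF 1 * aCF 0 + 1)
    (hprec : ∀ k, p (k + 2) = aCF (k + 2) * p (k + 1) + p k)
    (β : ℕ → ℝ)
    (hβ : ∀ k, β k = (q k : ℝ) * a - (p k : ℝ)) :
    (∃ ξ ν : ℕ, 0 < ν ∧ ∀ k, ξ < k → aCF (k + ν) = aCF k) ↔
      ∃ c₂ c₁ c₀ : ℚ, c₂ ≠ 0 ∧ (c₂ : ℝ) * a ^ 2 + (c₁ : ℝ) * a + (c₀ : ℝ) = 0 := by
  classical
  -- irrationality of all ζ k, together with the inverse formula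
  have hstep : ∀ k, Irrational (ζ k) →
      Irrational (ζ (k+1)) ∧ ζ (k+1) = (ζ k - aCF k)⁻¹ := by
    intro k hk
    have hfr : Irrational (ζ k - aCF k) := hk.sub_intCast _
    have hfrne : ζ k - (aCF k : ℝ) ≠ 0 := by
      intro h; exact (hfr.ne_int 0) (by simpa using h)
    have h1 : 1 / ζ (k+1) = ζ k - aCF k := by
      have := hζ k; linarith
    have hzne : ζ (k+1) ≠ 0 := by
      intro h; rw [h] at h1; simp at h1; exact hfrne h1.symm
    have hform : ζ (k+1) = (ζ k - aCF k)⁻¹ := by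
      rw [← h1]; field_simp
    exact ⟨hform ▸ hfr.inv, hform⟩
  have hirr : ∀ k, Irrational (ζ k) := by
    intro k; induction k with
    | zero => rwa [hζ0]
    | succ n ih => exact (hstep n ih).1
  have hinv : ∀ k, ζ (k+1) = (ζ k - aCF k)⁻¹ := fun k => (hstep k (hirr k)).2
  -- the fractional part is in (0,1)
  have hfr01 : ∀ k, 0 < ζ k - aCF k ∧ ζ k - aCF k < 1 := by
    intro k
    have h1 : ζ k - (aCF k : ℝ) = Int.fract (ζ k) := by rw [hfloor k]; rfl
    have h2 : ζ k - (aCF k : ℝ) ≠ 0 := fun h => ((hirr k).sub_intCast _).ne_int 0 (by simpa using h)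
    constructor
    · rcases lt_or_eq_of_le (h1 ▸ Int.fract_nonneg (ζ k)) with h | h
      · exact h
      · exact absurd h.symm h2
    · rw [h1]; exact Int.fract_lt_one _
  have hgt1 : ∀ k, 1 < ζ (k+1) := by
    intro k
    rw [hinv k]
    exact (one_lt_inv_iff₀).2 ⟨(hfr01 k).1, (hfr01 k).2⟩
  have hζpos : ∀ k, 0 < ζ (k+1) := fun k => lt_trans one_pos (hgt1 k)
  have hζne : ∀ k, ζ k ≠ 0 := fun k h => (hirr k).ne_int 0 (by simpa using h)
  -- digits are ≥ 1 from index 1 on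
  have hdig1 : ∀ k, 1 ≤ aCF (k+1) := by
    intro k; rw [hfloor]; exact Int.le_floor.2 (by exact_mod_cast (hgt1 k).le)
  -- q ≥ 1
  have hq1le : ∀ k, 1 ≤ q k ∧ 1 ≤ q (k+1) := by
    intro k; induction k with
    | zero => exact ⟨by rw [hq0], by rw [hq1]; exact hdig1 0⟩
    | succ n ih =>
      refine ⟨ih.2, ?_⟩
      rw [hqrec n]
      nlinarith [hdig1 (n+1), ih.1, ih.2]
  have hqpos : ∀ k, (1:ℤ) ≤ q k := fun k => (hq1le k).1
  -- q nondecreasing, with +1 steps from index 1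
  have hqstep : ∀ k, q (k+1) + 1 ≤ q (k+2) := by
    intro k; rw [hqrec k]; nlinarith [hdig1 (k+1), hqpos k, hqpos (k+1)]
  have hqmono : Monotone q := by
    apply monotone_nat_of_le_succ
    intro n
    cases n with
    | zero => rw [hq0, hq1]; exact hdig1 0
    | succ m => linarith [hqstep m]
  -- coprimality of consecutive q's
  have hqcop : ∀ k, IsCoprime (q k) (q (k+1)) := by
    intro k; induction k with
    | zero => rw [hq0]; exact isCoprime_one_left
    | succ n ih =>
      rw [hqrec n]
      exact ih.symm.mul_add_right_right _
  -- determinant identity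
  have hdet : ∀ k, p (k+1) * q k - p k * q (k+1) = (-1)^k := by
    intro k; induction k with
    | zero => rw [hp0, hp1, hq0, hq1]; ring
    | succ n ih =>
      rw [hprec n, hqrec n, pow_succ]
      linear_combination (-1 : ℤ) * ih
  -- hmul
  have hmul : ∀ k, ζ (k+1) * (ζ k - aCF k) = 1 := by
    intro k; rw [hinv k]
    exact inv_mul_cancel₀ (ne_of_gt (hfr01 k).1)
  -- the key identity
  have hI : ∀ k, ((q (k+1) : ℝ) * a - p (k+1)) * ζ (k+2) = (p k : ℝ) - q k * a := by
    intro k; induction k with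
    | zero =>
      have e0 : ζ 0 - (aCF 0 : ℝ) = a - aCF 0 := by rw [hζ0]
      have h0 : ζ 1 * (a - aCF 0) = 1 := by rw [← e0]; exact hmul 0
      have h1 : ζ 2 * (ζ 1 - aCF 1) = 1 := hmul 1
      rw [hq0, hq1, hp0, hp1]
      push_cast
      -- goal: (a1*a - (a1*a0+1)) * ζ 2 = a0 - 1*a
      have hz1 : ζ 1 = (a - aCF 0)⁻¹ := by rw [hinv 0, e0]
      have hane : a - (aCF 0 : ℝ) ≠ 0 := ne_of_gt (e0 ▸ (hfr01 0).1)
      rw [hz1] at h1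
      field_simp at h1
      linear_combination -h1
    | succ n ih =>
      have h2 : ζ (n+3) * (ζ (n+2) - aCF (n+2)) = 1 := hmul (n+2)
      show ((q (n+1+1) : ℝ) * a - p (n+1+1)) * ζ (n+3) = (p (n+1) : ℝ) - q (n+1) * a
      rw [hqrec n, hprec n]
      push_cast
      linear_combination (ζ (n+3)) * ih + ((p (n+1) : ℝ) - (q (n+1) : ℝ) * a) * h2
  have hprop : ∀ i j, ζ i = ζ j → ζ (i+1) = ζ (j+1) := by
    intro i j h
    rw [hinv i, hinv j, h, hfloor, hfloor, h]
  constructor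
  · intro hper4
    obtain ⟨ξ, ν, hν, hper⟩ := hper4
    set n := ξ + 1 with hn
    have hdig : ∀ j, aCF (n + j + ν) = aCF (n + j) := fun j => hper (n+j) (by omega)
    -- contraction step
    have hstep1 : ∀ j, |ζ (n+j) - ζ (n+j+ν)| * (ζ (n+j+1) * ζ (n+j+1+ν)) =
        |ζ (n+j+1) - ζ (n+j+1+ν)| := by
      intro j
      have hx := hζ (n+j)
      have hy := hζ (n+j+ν)
      rw [hdig j, show n+j+ν+1 = n+j+1+ν by omega] at hy
      have hxne : ζ (n+j+1) ≠ 0 := ne_of_gt (hζpos (n+j))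
      have hyne : ζ (n+j+1+ν) ≠ 0 := by
        have := hζpos (n+j+ν)
        rw [show n+j+ν+1 = n+j+1+ν by omega] at this
        exact ne_of_gt this
      have hd : (ζ (n+j) - ζ (n+j+ν)) * (ζ (n+j+1) * ζ (n+j+1+ν)) =
          ζ (n+j+1+ν) - ζ (n+j+1) := by
        rw [hx, hy]; field_simp; ring
      have hpos : 0 < ζ (n+j+1) * ζ (n+j+1+ν) := by
        have h2 : 0 < ζ (n+j+1+ν) := by
          have := hζpos (n+j+ν)
          rwa [show n+j+ν+1 = n+j+1+ν by omega] at this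
        exact mul_pos (hζpos (n+j)) h2
      calc |ζ (n+j) - ζ (n+j+ν)| * (ζ (n+j+1) * ζ (n+j+1+ν))
          = |(ζ (n+j) - ζ (n+j+ν)) * (ζ (n+j+1) * ζ (n+j+1+ν))| := by
            rw [abs_mul, abs_of_pos hpos]
        _ = |ζ (n+j+1+ν) - ζ (n+j+1)| := by rw [hd]
        _ = |ζ (n+j+1) - ζ (n+j+1+ν)| := abs_sub_comm _ _
    -- |d j| ≤ 1
    have hstep0 : ∀ j, |ζ (n+j) - ζ (n+j+ν)| ≤ 1 := by
      intro j
      have h1 := hfr01 (n+j)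
      have h2 := hfr01 (n+j+ν)
      rw [hdig j] at h2
      rw [abs_le]; constructor <;> [linarith [h1.1, h2.2]; linarith [h1.2, h2.1]]
    -- growth: ζ (m+1) * ζ (m+2) ≥ 2
    have hgrow : ∀ m, 2 ≤ ζ (m+1) * ζ (m+2) := by
      intro m
      have h := hζ (m+1)
      have hne2 : ζ (m+2) ≠ 0 := ne_of_gt (hζpos (m+1))
      have hmul2 : ζ (m+1) * ζ (m+2) = aCF (m+1) * ζ (m+2) + 1 := by
        rw [h]; field_simp
      rw [hmul2]
      have h1 : (1:ℝ) ≤ (aCF (m+1) : ℝ) := by exact_mod_cast hdig1 m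
      nlinarith [hgt1 (m+1)]
    -- main bound
    have hmain : ∀ m j, |ζ (n+j) - ζ (n+j+ν)| ≤ (1/2)^m := by
      intro m
      induction m with
      | zero => simpa using hstep0
      | succ m ih =>
        intro j
        have e1 := hstep1 j
        have e2 : |ζ (n+j+1) - ζ (n+j+1+ν)| * (ζ (n+j+2) * ζ (n+j+2+ν)) =
            |ζ (n+j+2) - ζ (n+j+2+ν)| := hstep1 (j+1)
        have hij : |ζ (n+j+2) - ζ (n+j+2+ν)| ≤ (1/2)^m := ih (j+2)
        have hg1 : 2 ≤ ζ (n+j+1) * ζ (n+j+2) := hgrow (n+j)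
        have hg2 : 2 ≤ ζ (n+j+1+ν) * ζ (n+j+2+ν) := by
          have := hgrow (n+j+ν)
          rwa [show n+j+ν+1 = n+j+1+ν by omega, show n+j+ν+2 = n+j+2+ν by omega] at this
        have hx1 : 1 < ζ (n+j+1) := hgt1 (n+j)
        have hx2 : 1 < ζ (n+j+2) := hgt1 (n+j+1)
        have hy1 : 1 < ζ (n+j+1+ν) := by
          have := hgt1 (n+j+ν)
          rwa [show n+j+ν+1 = n+j+1+ν by omega] at this
        have hy2 : 1 < ζ (n+j+2+ν) := by
          have := hgt1 (n+j+1+ν)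
          rwa [show n+j+1+ν+1 = n+j+2+ν by omega] at this
        have h4 : |ζ (n+j) - ζ (n+j+ν)| * ((ζ (n+j+1) * ζ (n+j+1+ν)) * (ζ (n+j+2) * ζ (n+j+2+ν)))
            = |ζ (n+j+2) - ζ (n+j+2+ν)| := by
          rw [← e2, ← e1]; ring
        have hprod : 4 ≤ (ζ (n+j+1) * ζ (n+j+1+ν)) * (ζ (n+j+2) * ζ (n+j+2+ν)) := by
          nlinarith
        have hd0 : 0 ≤ |ζ (n+j) - ζ (n+j+ν)| := abs_nonneg _
        have h5 : |ζ (n+j) - ζ (n+j+ν)| * 4 ≤ (1/2)^m := by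
          calc |ζ (n+j) - ζ (n+j+ν)| * 4
              ≤ |ζ (n+j) - ζ (n+j+ν)| * ((ζ (n+j+1) * ζ (n+j+1+ν)) * (ζ (n+j+2) * ζ (n+j+2+ν))) :=
                mul_le_mul_of_nonneg_left hprod hd0
            _ = |ζ (n+j+2) - ζ (n+j+2+ν)| := h4
            _ ≤ (1/2)^m := hij
        rw [pow_succ]
        linarith
    -- hence ζ n = ζ (n + ν)
    have hznn : ζ n = ζ (n + ν) := by
      by_contra hne
      have hpos : 0 < |ζ n - ζ (n+ν)| := abs_pos.2 (sub_ne_zero.2 hne)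
      obtain ⟨m, hm⟩ := exists_pow_lt_of_lt_one hpos (by norm_num : (1/2 : ℝ) < 1)
      have := hmain m 0
      simp only [Nat.add_zero] at this
      linarith
    -- propagate one step: ζ (ξ+2) = ζ (ξ+ν+2)
    have hts : ζ (ξ+2) = ζ (ξ+ν+2) := by
      have := hprop _ _ hznn
      rw [show n + 1 = ξ + 2 by omega, show n + ν + 1 = ξ + ν + 2 by omega] at this
      exact this
    set t := ξ with hteq
    set s := ξ + ν with hseq
    -- the quadratic relation
    have key : ((p t:ℝ) - q t * a) * ((q (s+1):ℝ)*a - p (s+1)) =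
        ((q (t+1):ℝ)*a - p (t+1)) * ((p s:ℝ) - q s * a) := by
      have h1 := hI t
      have h2 := hI s
      linear_combination (-((q (s+1):ℝ)*a - p (s+1))) * h1 + ((q (t+1):ℝ)*a - p (t+1)) * h2
        + ((q (t+1):ℝ)*a - p (t+1)) * ((q (s+1):ℝ)*a - p (s+1)) * hts
    -- integer coefficients
    refine ⟨((q s * q (t+1) - q t * q (s+1) : ℤ) : ℚ),
      ((p t * q (s+1) + q t * p (s+1) - q (t+1) * p s - p (t+1) * q s : ℤ) : ℚ),
      ((p (t+1) * p s - p t * p (s+1) : ℤ) : ℚ), ?_, ?_⟩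
    · rw [Int.cast_ne_zero]
      intro hc2
      have hc2' : q s * q (t+1) = q t * q (s+1) := by linarith [hc2]
      have hd1 : q (t+1) ∣ q (s+1) := by
        have hdvd : q (t+1) ∣ q t * q (s+1) := ⟨q s, by linarith⟩
        exact ((hqcop t).symm).dvd_of_dvd_mul_left hdvd
      have hd2 : q (s+1) ∣ q (t+1) := by
        have hdvd : q (s+1) ∣ q s * q (t+1) := ⟨q t, by linarith⟩
        exact ((hqcop s).symm).dvd_of_dvd_mul_left hdvd
      have heq2 : q (t+1) = q (s+1) :=
        Int.dvd_antisymm (by linarith [hqpos (t+1)]) (by linarith [hqpos (s+1)]) hd1 hd2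
      have hlt : q (t+1) + 1 ≤ q (s+1) := by
        have h1 := hqstep t
        have h2 := hqmono (show t+2 ≤ s+1 by omega)
        linarith
      omega
    · push_cast
      linear_combination key

  · intro hquad
    obtain ⟨c₂, c₁, c₀, hc2, heq⟩ := hquad
    -- integer coefficients
    obtain ⟨d2, hd2def⟩ : ∃ d : ℤ, d = c₂.num * (c₁.den : ℤ) * (c₀.den : ℤ) := ⟨_, rfl⟩
    obtain ⟨d1, hd1def⟩ : ∃ d : ℤ, d = c₁.num * (c₂.den : ℤ) * (c₀.den : ℤ) := ⟨_, rfl⟩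
    obtain ⟨d0, hd0def⟩ : ∃ d : ℤ, d = c₀.num * (c₂.den : ℤ) * (c₁.den : ℤ) := ⟨_, rfl⟩
    have hd2 : d2 ≠ 0 := by
      rw [hd2def]
      exact mul_ne_zero (mul_ne_zero (Rat.num_ne_zero.2 hc2) (by exact_mod_cast c₁.den_nz))
        (by exact_mod_cast c₀.den_nz)
    have hnum : ∀ r : ℚ, ((r.num : ℝ)) = (r : ℝ) * (r.den : ℝ) := by
      intro r
      rw [Rat.cast_def]
      field_simp
    have hF : (d2:ℝ) * a^2 + (d1:ℝ) * a + (d0:ℝ) = 0 := by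
      rw [hd2def, hd1def, hd0def]
      push_cast
      rw [hnum c₂, hnum c₁, hnum c₀]
      linear_combination ((c₂.den : ℝ) * (c₁.den : ℝ) * (c₀.den : ℝ)) * heq
    -- beta is nonzero
    have hβne : ∀ k, (q k : ℝ) * a - p k ≠ 0 := by
      intro k h
      have hqne : ((q k : ℝ)) ≠ 0 := by
        have := hqpos k; positivity
      refine ha ⟨(p k : ℚ) / (q k : ℚ), ?_⟩
      push_cast
      field_simp
      linarith
    -- the A and B sequences
    obtain ⟨A, hA⟩ : ∃ A : ℕ → ℤ, ∀ k,
        A k = d2 * (p k)^2 + d1 * (p k * q k) + d0 * (q k)^2 := ⟨_, fun _ => rfl⟩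
    obtain ⟨B, hB⟩ : ∃ B : ℕ → ℤ, ∀ k,
        B k = 2*d2*(p (k+1) * p k) + d1*(p (k+1) * q k + p k * q (k+1)) + 2*d0*(q (k+1) * q k)
        := ⟨_, fun _ => rfl⟩
    -- quadratic satisfied by ζ (k+2)
    have hAquad : ∀ k, (A (k+1) : ℝ) * ζ (k+2)^2 + (B k : ℝ) * ζ (k+2) + (A k : ℝ) = 0 := by
      intro k
      rw [hA, hA, hB]
      push_cast
      linear_combination
        (((q (k+1):ℝ) * ζ (k+2) + q k)^2) * hF +
        (-(((d2:ℝ)) * (a * ((q (k+1):ℝ) * ζ (k+2) + q k) + ((p (k+1):ℝ) * ζ (k+2) + p k))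
          + (d1:ℝ) * ((q (k+1):ℝ) * ζ (k+2) + q k))) * (hI k)
    -- A is never zero
    have hAne : ∀ k, A k ≠ 0 := by
      intro k hk
      have hAr : (d2:ℝ) * (p k)^2 + d1 * ((p k) * (q k)) + d0 * (q k)^2 = 0 := by
        have : ((A k : ℤ) : ℝ) = 0 := by rw [hk]; norm_num
        rw [hA] at this; push_cast at this; linarith
      have hprod : ((q k : ℝ) * a - p k) *
          ((d2:ℝ) * ((q k) * a + p k) + (d1:ℝ) * q k) = 0 := by
        linear_combination ((q k : ℝ)^2) * hF - hAr
      have h2 := (mul_eq_zero.1 hprod).resolve_left (hβne k)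
      have hqne : ((q k : ℝ)) ≠ 0 := by have := hqpos k; positivity
      have hd2r : ((d2 : ℝ)) ≠ 0 := by exact_mod_cast hd2
      refine ha ⟨(-(d1:ℚ) * (q k) - (d2:ℚ) * (p k)) / ((d2:ℚ) * (q k)), ?_⟩
      push_cast
      field_simp
      linarith
    -- bound on |beta| : |q k * a - p k| * q k ≤ 1 and ≤ 1
    have hβform : ∀ k, ((q k:ℝ) * a - p k) * ((q (k+1):ℝ) * ζ (k+2) + q k)
        = ((-1)^k : ℝ) * ζ (k+2) := by
      intro k
      have hdetR : ((p (k+1):ℝ)) * q k - (p k : ℝ) * q (k+1) = (-1)^k := by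
        exact_mod_cast hdet k
      linear_combination ((q k : ℝ)) * hI k + ζ (k+2) * hdetR
    have hβbd : ∀ k, |(q k:ℝ) * a - p k| * (q k : ℝ) ≤ 1 ∧ |(q k:ℝ) * a - p k| ≤ 1 := by
      intro k
      have hq1 : (1:ℝ) ≤ (q k : ℝ) := by exact_mod_cast hqpos k
      have hq2 : (q k : ℝ) ≤ (q (k+1) : ℝ) := by exact_mod_cast hqmono (Nat.le_succ k)
      have hz : 1 < ζ (k+2) := hgt1 (k+1)
      have habs : |(q k:ℝ) * a - p k| * ((q (k+1):ℝ) * ζ (k+2) + q k) = ζ (k+2) := by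
        have := congrArg abs (hβform k)
        rwa [abs_mul, abs_mul, abs_pow, abs_neg, abs_one, one_pow, one_mul,
          abs_of_pos (show (0:ℝ) < (q (k+1):ℝ) * ζ (k+2) + q k by nlinarith),
          abs_of_pos (show (0:ℝ) < ζ (k+2) by linarith)] at this
      have hb0 : 0 ≤ |(q k:ℝ) * a - p k| := abs_nonneg _
      have habs' : |(q k:ℝ) * a - p k| * (q (k+1):ℝ) * ζ (k+2)
          + |(q k:ℝ) * a - p k| * (q k : ℝ) = ζ (k+2) := by linear_combination habs
      have hnn : 0 ≤ |(q k:ℝ) * a - p k| * (q k : ℝ) :=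
        mul_nonneg hb0 (by linarith)
      have h3 : |(q k:ℝ) * a - p k| * (q (k+1):ℝ) ≤ 1 := by
        have h4 : |(q k:ℝ) * a - p k| * (q (k+1):ℝ) * ζ (k+2) ≤ 1 * ζ (k+2) := by
          rw [one_mul]; linarith
        exact le_of_mul_le_mul_right h4 (by linarith)
      have h5 : |(q k:ℝ) * a - p k| * (q k : ℝ) ≤ 1 := by
        have := mul_le_mul_of_nonneg_left hq2 hb0
        linarith
      refine ⟨h5, ?_⟩
      have := mul_le_mul_of_nonneg_left hq1 hb0
      rw [mul_one] at this
      linarith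
    -- |A k| is bounded
    obtain ⟨M1, hM1⟩ : ∃ m : ℤ, m = |d2| + 2 * |d2| * (⌊|a|⌋ + 1) + |d1| := ⟨_, rfl⟩
    have hAbd : ∀ k, |A k| ≤ M1 := by
      intro k
      have hb := hβbd k
      have hq1 : (1:ℝ) ≤ (q k : ℝ) := by exact_mod_cast hqpos k
      have hAform : (A k : ℝ) = ((q k:ℝ)*a - p k) *
          ((d2:ℝ)*((q k:ℝ)*a - p k) - 2*(d2:ℝ)*(q k)*a - (d1:ℝ)*(q k)) := by
        rw [hA]; push_cast
        linear_combination ((q k : ℝ)^2) * hF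
      have haf : |a| < (⌊|a|⌋ : ℝ) + 1 := Int.lt_floor_add_one _
      have haf0 : (0:ℝ) ≤ |a| := abs_nonneg _
      have hG : |(d2:ℝ)*((q k:ℝ)*a - p k) - 2*(d2:ℝ)*(q k)*a - (d1:ℝ)*(q k)|
          ≤ |(d2:ℝ)| * |(q k:ℝ)*a - (p k:ℝ)| + 2 * |(d2:ℝ)| * (q k : ℝ) * |a|
            + |(d1:ℝ)| * (q k : ℝ) := by
        have t1 : |(d2:ℝ)*((q k:ℝ)*a - p k) - 2*(d2:ℝ)*(q k)*a - (d1:ℝ)*(q k)|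
            ≤ |(d2:ℝ)*((q k:ℝ)*a - p k) - 2*(d2:ℝ)*(q k)*a| + |(d1:ℝ)*(q k)| := abs_sub _ _
        have t2 : |(d2:ℝ)*((q k:ℝ)*a - p k) - 2*(d2:ℝ)*(q k)*a|
            ≤ |(d2:ℝ)*((q k:ℝ)*a - p k)| + |2*(d2:ℝ)*(q k)*a| := abs_sub _ _
        have e1 : |(d2:ℝ)*((q k:ℝ)*a - p k)| = |(d2:ℝ)| * |(q k:ℝ)*a - (p k:ℝ)| := abs_mul _ _
        have e2 : |2*(d2:ℝ)*(q k)*a| = 2 * |(d2:ℝ)| * (q k : ℝ) * |a| := by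
          rw [abs_mul, abs_mul, abs_mul, abs_two,
            abs_of_nonneg (show (0:ℝ) ≤ (q k : ℝ) by linarith)]
        have e3 : |(d1:ℝ)*(q k)| = |(d1:ℝ)| * (q k : ℝ) := by
          rw [abs_mul, abs_of_nonneg (show (0:ℝ) ≤ (q k : ℝ) by linarith)]
        rw [e1, e2] at t2
        rw [e3] at t1
        linarith
      have hb0 : 0 ≤ |(q k:ℝ) * a - p k| := abs_nonneg _
      have hd2a : (0:ℝ) ≤ |(d2:ℝ)| := abs_nonneg _
      have hd1a : (0:ℝ) ≤ |(d1:ℝ)| := abs_nonneg _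
      have h1 : |(A k : ℝ)| ≤ |(d2:ℝ)| + 2 * |(d2:ℝ)| * ((⌊|a|⌋:ℝ)+1) + |(d1:ℝ)| := by
        rw [hAform, abs_mul]
        have step1 : |(q k:ℝ)*a - p k| * |(d2:ℝ)*((q k:ℝ)*a - p k) - 2*(d2:ℝ)*(q k)*a - (d1:ℝ)*(q k)|
            ≤ |(q k:ℝ)*a - p k| * (|(d2:ℝ)| * |(q k:ℝ)*a - (p k:ℝ)| + 2 * |(d2:ℝ)| * (q k : ℝ) * |a|
              + |(d1:ℝ)| * (q k : ℝ)) := mul_le_mul_of_nonneg_left hG hb0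
        have expand : |(q k:ℝ)*a - p k| * (|(d2:ℝ)| * |(q k:ℝ)*a - (p k:ℝ)| + 2 * |(d2:ℝ)| * (q k : ℝ) * |a|
              + |(d1:ℝ)| * (q k : ℝ))
            = |(d2:ℝ)| * (|(q k:ℝ)*a - (p k:ℝ)| * |(q k:ℝ)*a - (p k:ℝ)|)
              + 2 * |(d2:ℝ)| * |a| * (|(q k:ℝ)*a - (p k:ℝ)| * (q k : ℝ))
              + |(d1:ℝ)| * (|(q k:ℝ)*a - (p k:ℝ)| * (q k : ℝ)) := by ring
        have t1 : |(q k:ℝ)*a - (p k:ℝ)| * |(q k:ℝ)*a - (p k:ℝ)| ≤ 1 :=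
          mul_le_one₀ hb.2 hb0 hb.2
        have t2 : (0:ℝ) ≤ 2 * |(d2:ℝ)| * |a| := by positivity
        have t3 : 2 * |(d2:ℝ)| * |a| * (|(q k:ℝ)*a - (p k:ℝ)| * (q k : ℝ)) ≤ 2 * |(d2:ℝ)| * |a| := by
          have := mul_le_mul_of_nonneg_left hb.1 t2
          rwa [mul_one] at this
        have t4 : |(d1:ℝ)| * (|(q k:ℝ)*a - (p k:ℝ)| * (q k : ℝ)) ≤ |(d1:ℝ)| := by
          have := mul_le_mul_of_nonneg_left hb.1 hd1a
          rwa [mul_one] at this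
        have t5 : |(d2:ℝ)| * (|(q k:ℝ)*a - (p k:ℝ)| * |(q k:ℝ)*a - (p k:ℝ)|) ≤ |(d2:ℝ)| := by
          have := mul_le_mul_of_nonneg_left t1 hd2a
          rwa [mul_one] at this
        have t6 : 2 * |(d2:ℝ)| * |a| ≤ 2 * |(d2:ℝ)| * ((⌊|a|⌋:ℝ)+1) := by
          exact mul_le_mul_of_nonneg_left haf.le (by positivity)
        calc |(q k:ℝ)*a - p k| * |(d2:ℝ)*((q k:ℝ)*a - p k) - 2*(d2:ℝ)*(q k)*a - (d1:ℝ)*(q k)|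
            ≤ |(d2:ℝ)| * (|(q k:ℝ)*a - (p k:ℝ)| * |(q k:ℝ)*a - (p k:ℝ)|)
              + 2 * |(d2:ℝ)| * |a| * (|(q k:ℝ)*a - (p k:ℝ)| * (q k : ℝ))
              + |(d1:ℝ)| * (|(q k:ℝ)*a - (p k:ℝ)| * (q k : ℝ)) := by rw [← expand]; exact step1
          _ ≤ |(d2:ℝ)| + 2 * |(d2:ℝ)| * |a| + |(d1:ℝ)| := by linarith
          _ ≤ |(d2:ℝ)| + 2 * |(d2:ℝ)| * ((⌊|a|⌋:ℝ)+1) + |(d1:ℝ)| := by linarith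
      have h2 : ((|A k| : ℤ) : ℝ) ≤ ((M1 : ℤ) : ℝ) := by
        rw [Int.cast_abs, hM1]
        push_cast
        exact h1
      exact_mod_cast h2
    -- discriminant identity bounds B
    obtain ⟨M2, hM2⟩ : ∃ m : ℤ, m = 4 * M1^2 + |d1^2 - 4*d2*d0| := ⟨_, rfl⟩
    have hBbd : ∀ k, |B k| ≤ M2 := by
      intro k
      have hdisc : (B k)^2 = 4 * (A (k+1)) * (A k)
          + (d1^2 - 4*d2*d0) * (p (k+1) * q k - p k * q (k+1))^2 := by
        rw [hA, hA, hB]; ring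
      have hd : (p (k+1) * q k - p k * q (k+1))^2 = 1 := by
        rcases neg_one_pow_eq_or ℤ k with h | h <;> rw [hdet k, h] <;> norm_num
      rw [hd, mul_one] at hdisc
      have hA1 := hAbd (k+1)
      have hA2 := hAbd k
      have hBsq : (B k)^2 ≤ M2 := by
        rw [hdisc, hM2]
        have h1 : 4 * (A (k+1)) * (A k) ≤ 4 * M1^2 := by nlinarith [abs_nonneg (A (k+1)), abs_nonneg (A k), abs_mul_abs_self (A (k+1)), abs_mul_abs_self (A k), abs_mul (A (k+1)) (A k), abs_le.1 hA1, abs_le.1 hA2]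
        have h2 : d1^2 - 4*d2*d0 ≤ |d1^2 - 4*d2*d0| := le_abs_self _
        linarith
      rcases eq_or_ne (B k) 0 with h | h
      · rw [h, abs_zero, hM2]
        positivity
      · have h1 : 1 ≤ |B k| := Int.one_le_abs (by exact_mod_cast h)
        have : |B k| ≤ |B k| * |B k| := le_mul_of_one_le_left (abs_nonneg _) h1
        rw [abs_mul_abs_self] at this
        nlinarith
    -- pigeonhole setup
    obtain ⟨M, hMdef⟩ : ∃ m : ℤ, m = max M1 M2 := ⟨_, rfl⟩
    have hAM : ∀ k, A k ∈ Finset.Icc (-M) M := by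
      intro k
      exact Finset.mem_Icc.2 (abs_le.1 ((hAbd k).trans (hMdef ▸ le_max_left M1 M2)))
    have hBM : ∀ k, B k ∈ Finset.Icc (-M) M := by
      intro k
      exact Finset.mem_Icc.2 (abs_le.1 ((hBbd k).trans (hMdef ▸ le_max_right M1 M2)))
    obtain ⟨Φ, hΦ⟩ : ∃ Φ : ℕ → (ℤ × ℤ × ℤ) × Bool, ∀ k, Φ k =
        ((A (k+1), B k, A k),
          if 0 ≤ 2 * (A (k+1) : ℝ) * ζ (k+2) + (B k : ℝ) then true else false) :=
      ⟨_, fun _ => rfl⟩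
    have hmaps : Set.MapsTo Φ (Set.univ : Set ℕ)
        ((↑(Finset.Icc (-M) M ×ˢ Finset.Icc (-M) M ×ˢ Finset.Icc (-M) M) : Set (ℤ × ℤ × ℤ)) ×ˢ
          (Set.univ : Set Bool)) := by
      intro k _
      rw [hΦ k]
      constructor
      · simp only [Finset.coe_product, Set.mem_prod]
        exact ⟨hAM (k+1), hBM k, hAM k⟩
      · trivial
    obtain ⟨k₁, -, k₂, -, hne, hfeq⟩ :=
      Set.infinite_univ.exists_ne_map_eq_of_mapsTo hmaps
        (((Finset.Icc (-M) M ×ˢ Finset.Icc (-M) M ×ˢ Finset.Icc (-M) M).finite_toSet).prod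
          (Set.finite_univ))
    rw [hΦ k₁, hΦ k₂, Prod.mk.injEq, Prod.mk.injEq, Prod.mk.injEq] at hfeq
    obtain ⟨⟨hA1eq, hB1eq, hA0eq⟩, hbool⟩ := hfeq
    have hsign : (0 ≤ 2 * (A (k₁+1) : ℝ) * ζ (k₁+2) + (B k₁ : ℝ)) ↔
        (0 ≤ 2 * (A (k₂+1) : ℝ) * ζ (k₂+2) + (B k₂ : ℝ)) := by
      by_cases h₁ : 0 ≤ 2 * (A (k₁+1) : ℝ) * ζ (k₁+2) + (B k₁ : ℝ) <;>
        by_cases h₂ : 0 ≤ 2 * (A (k₂+1) : ℝ) * ζ (k₂+2) + (B k₂ : ℝ) <;>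
        simp [h₁, h₂] at hbool ⊢
    rw [← hA1eq, ← hB1eq] at hsign
    have hzeq : ζ (k₁+2) = ζ (k₂+2) := by
      have q1 := hAquad k₁
      have q2 := hAquad k₂
      rw [← hA1eq, ← hB1eq, ← hA0eq] at q2
      have hfac : (2 * (A (k₁+1) : ℝ) * ζ (k₁+2) + (B k₁ : ℝ)
            - (2 * (A (k₁+1) : ℝ) * ζ (k₂+2) + (B k₁ : ℝ)))
          * (2 * (A (k₁+1) : ℝ) * ζ (k₁+2) + (B k₁ : ℝ)
            + (2 * (A (k₁+1) : ℝ) * ζ (k₂+2) + (B k₁ : ℝ))) = 0 := by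
        linear_combination (4 * (A (k₁+1) : ℝ)) * q1 - (4 * (A (k₁+1) : ℝ)) * q2
      have hA'ne : ((A (k₁+1) : ℝ)) ≠ 0 := Int.cast_ne_zero.2 (hAne (k₁+1))
      have huu : 2 * (A (k₁+1) : ℝ) * ζ (k₁+2) + (B k₁ : ℝ)
          = 2 * (A (k₁+1) : ℝ) * ζ (k₂+2) + (B k₁ : ℝ) := by
        rcases mul_eq_zero.1 hfac with h | h
        · linarith
        · by_cases hs : 0 ≤ 2 * (A (k₁+1) : ℝ) * ζ (k₁+2) + (B k₁ : ℝ)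
          · have := hsign.1 hs
            linarith
          · push_neg at hs
            have h2 : ¬ (0 ≤ 2 * (A (k₁+1) : ℝ) * ζ (k₂+2) + (B k₁ : ℝ)) := fun hc =>
              absurd (hsign.2 hc) (not_le.2 hs)
            push_neg at h2
            linarith
      have h3 : (2 * (A (k₁+1) : ℝ)) * (ζ (k₁+2) - ζ (k₂+2)) = 0 := by linarith
      rcases mul_eq_zero.1 h3 with h | h
      · exact absurd h (by simpa using hA'ne)
      · linarith
    have main : ∀ m₁ m₂ : ℕ, m₁ < m₂ → ζ (m₁+2) = ζ (m₂+2) →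
        ∃ ξ ν : ℕ, 0 < ν ∧ ∀ k, ξ < k → aCF (k + ν) = aCF k := by
      intro m₁ m₂ hlt hz
      have hall : ∀ j, ζ (m₁+2+j) = ζ (m₂+2+j) := by
        intro j
        induction j with
        | zero => exact hz
        | succ n ih => exact hprop _ _ ih
      refine ⟨m₁+2, m₂ - m₁, by omega, ?_⟩
      intro k hk
      obtain ⟨j, rfl⟩ : ∃ j, k = m₁+2+j := ⟨k - (m₁+2), by omega⟩
      have h1 : m₁+2+j + (m₂ - m₁) = m₂+2+j := by omega
      rw [h1, hfloor (m₂+2+j), hfloor (m₁+2+j), hall j]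
    rcases hne.lt_or_gt with h | h
    · exact main _ _ h hzeq
    · exact main _ _ h hzeq.symm
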